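/- Let B ∼ Binomial(k, p). Then for every positive integer ℓ, E[B^ℓ] ≤ (kp + ℓ/2)^ℓ. -/

import Mathlib

noncomputable def Eb (q : ℝ) (k ℓ : ℕ) : ℝ :=
  ∑ i ∈ Finset.range (k+1), ((k.choose i : ℝ) * q^i * (1-q)^(k-i)) * (i : ℝ)^ℓ

lemma Eb_zero (q : ℝ) (k : ℕ) : Eb q k 0 = 1 := by
  have h : Eb q k 0 = (q + (1-q))^k := by
    rw [add_pow, Eb]
    exact Finset.sum_congr rfl fun i hi => by ring
  simp at h; exact h

lemma Eb_nonneg {q : ℝ} (h0 : 0 ≤ q) (h1 : q ≤ 1) (k ℓ : ℕ) : 0 ≤ Eb q k ℓ := by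
  apply Finset.sum_nonneg
  intro i _
  have : (0:ℝ) ≤ 1 - q := by linarith
  positivity

lemma Eb_succ (q : ℝ) (k ℓ : ℕ) :
    Eb q (k+1) (ℓ+1)
      = (k+1) * q * ∑ j ∈ Finset.range (k+1),
          ((k.choose j : ℝ) * q^j * (1-q)^(k-j)) * ((j:ℝ)+1)^ℓ := by
  rw [Eb, Finset.sum_range_succ', Finset.mul_sum]
  simp only [Nat.cast_zero, zero_pow (Nat.succ_ne_zero ℓ), mul_zero, add_zero]
  apply Finset.sum_congr rfl
  intro j hj
  have hch : ((k+1).choose (j+1) * (j+1) : ℝ) = (k+1) * (k.choose j) := by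
    have h := Nat.add_one_mul_choose_eq k j
    exact_mod_cast congrArg (Nat.cast (R := ℝ)) h.symm
  have hsub : k + 1 - (j + 1) = k - j := by omega
  rw [hsub]
  push_cast
  linear_combination (q^(j+1) * (1-q)^(k-j) * ((j:ℝ)+1)^ℓ) * hch

lemma amgm_key (a : ℝ) (ha : 0 ≤ a) (n : ℕ) :
    a * (a + (n+1)/2 + 1/2)^n ≤ (a + (n+1)/2)^(n+1) := by
  set m : ℝ := a + (n+1)/2 with hm
  have hm0 : 0 ≤ m := by positivity
  set b : ℝ := m + 1/2 with hb
  have hb0 : 0 ≤ b := by positivity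
  have hw : (1:ℝ)/(n+1) + n/(n+1) = 1 := by field_simp; ring
  have hgm := Real.geom_mean_le_arith_mean2_weighted
    (by positivity : (0:ℝ) ≤ 1/(n+1)) (by positivity : (0:ℝ) ≤ (n:ℝ)/(n+1)) ha hb0 hw
  have harith : (1:ℝ)/(n+1) * a + (n:ℝ)/(n+1) * b ≤ m := by
    rw [hb, hm]
    have hpos : (0:ℝ) < (n:ℝ)+1 := by positivity
    rw [div_mul_eq_mul_div, div_mul_eq_mul_div, ← add_div, div_le_iff₀ hpos]
    ring_nf
    nlinarith [hpos]
  have hx : a ^ ((1:ℝ)/(n+1)) * b ^ ((n:ℝ)/(n+1)) ≤ m := le_trans hgm harith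
  have hx0 : 0 ≤ a ^ ((1:ℝ)/(n+1)) * b ^ ((n:ℝ)/(n+1)) := by positivity
  have hpow := pow_le_pow_left₀ hx0 hx (n+1)
  have hne : ((n:ℝ)+1) ≠ 0 := by positivity
  calc a * b^n = (a ^ ((1:ℝ)/(n+1)) * b ^ ((n:ℝ)/(n+1)))^(n+1) := by
        rw [mul_pow, ← Real.rpow_natCast (a ^ ((1:ℝ)/(n+1))) (n+1),
            ← Real.rpow_natCast (b ^ ((n:ℝ)/(n+1))) (n+1),
            ← Real.rpow_mul ha, ← Real.rpow_mul hb0]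
        push_cast
        rw [one_div, inv_mul_cancel₀ hne, div_mul_cancel₀ _ hne, Real.rpow_one,
            Real.rpow_natCast]
    _ ≤ m^(n+1) := hpow

lemma Eb_le {q : ℝ} (h0 : 0 ≤ q) (h1 : q ≤ 1) : ∀ ℓ k, Eb q k ℓ ≤ ((k:ℝ)*q + ℓ/2)^ℓ := by
  intro ℓ
  induction ℓ using Nat.strong_induction_on with
  | _ ℓ ih =>
    match ℓ with
    | 0 => intro k; simp [Eb_zero]
    | (n+1) =>
      intro k
      match k with
      | 0 =>
        have : Eb q 0 (n+1) = 0 := by simp [Eb]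
        rw [this]
        positivity
      | (k'+1) =>
        have h1q : (0:ℝ) ≤ 1 - q := by linarith
        rw [Eb_succ]
        set a : ℝ := ((k':ℝ)+1) * q with hadef
        have ha : 0 ≤ a := by positivity
        set B : ℝ := a + n/2 with hB
        have hBnn : 0 ≤ B := by positivity
        have hT : ∑ j ∈ Finset.range (k'+1),
            ((k'.choose j : ℝ) * q^j * (1-q)^(k'-j)) * ((j:ℝ)+1)^n
            ≤ (B + 1)^n := by
          have hexp : ∀ j ∈ Finset.range (k'+1),
              ((k'.choose j : ℝ) * q^j * (1-q)^(k'-j)) * ((j:ℝ)+1)^n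
              = ∑ t ∈ Finset.range (n+1),
                 ((k'.choose j : ℝ) * q^j * (1-q)^(k'-j)) * ((j:ℝ)^t * (n.choose t)) := by
            intro j _
            rw [← Finset.mul_sum]
            congr 1
            rw [add_pow]
            exact Finset.sum_congr rfl fun t _ => by ring
          rw [Finset.sum_congr rfl hexp, Finset.sum_comm]
          have hstep : ∀ t ∈ Finset.range (n+1),
              ∑ j ∈ Finset.range (k'+1),
                ((k'.choose j : ℝ) * q^j * (1-q)^(k'-j)) * ((j:ℝ)^t * (n.choose t))
              ≤ B^t * 1^(n-t) * (n.choose t) := by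
            intro t ht
            have hsum : ∑ j ∈ Finset.range (k'+1),
                ((k'.choose j : ℝ) * q^j * (1-q)^(k'-j)) * ((j:ℝ)^t * (n.choose t))
                = Eb q k' t * (n.choose t) := by
              rw [Eb, Finset.sum_mul]
              exact Finset.sum_congr rfl fun j _ => by ring
            rw [hsum, one_pow, mul_one]
            have hEb : Eb q k' t ≤ ((k':ℝ)*q + t/2)^t := ih t (Finset.mem_range.1 ht) k'
            have hbase : ((k':ℝ)*q + t/2)^t ≤ B^t := by
              apply pow_le_pow_left₀ (by positivity)
              have ht' : (t:ℝ) ≤ n := by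
                exact_mod_cast Nat.lt_succ_iff.1 (Finset.mem_range.1 ht)
              rw [hB, hadef]
              nlinarith
            exact mul_le_mul_of_nonneg_right (le_trans hEb hbase) (by positivity)
          calc _ ≤ ∑ t ∈ Finset.range (n+1), B^t * 1^(n-t) * (n.choose t) :=
                Finset.sum_le_sum hstep
            _ = (B + 1)^n := (add_pow B 1 n).symm
        have hfin : a * (B + 1)^n ≤ (a + (n+1)/2)^(n+1) := by
          have : B + 1 = a + (n+1)/2 + 1/2 := by rw [hB]; ring
          rw [this]
          exact amgm_key a ha n
        calc ((k':ℝ)+1) * q * ∑ j ∈ Finset.range (k'+1),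
              ((k'.choose j : ℝ) * q^j * (1-q)^(k'-j)) * ((j:ℝ)+1)^n
            ≤ a * (B+1)^n := mul_le_mul_of_nonneg_left hT ha
          _ ≤ (a + (n+1)/2)^(n+1) := hfin
          _ = (((k'+1:ℕ):ℝ)*q + ((n+1:ℕ):ℝ)/2)^(n+1) := by push_cast; ring

/-- Moment bound for the binomial distribution (Ahle 2022, Corollary 1):
if B ∼ Binomial(k, p) then E[B^ℓ] ≤ (kp + ℓ/2)^ℓ. -/
theorem stmt10 (k : ℕ) (p : ENNReal) (hp : p ≤ 1) (ℓ : ℕ) (hℓ : 0 < ℓ) :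
    ∑ i : Fin (k + 1), (PMF.binomial p.toNNReal (by simpa using ENNReal.toNNReal_mono ENNReal.one_ne_top hp) k i).toReal * (i : ℕ) ^ ℓ
      ≤ ((k : ℝ) * p.toReal + ℓ / 2) ^ ℓ := by
  have hp' : p.toNNReal ≤ 1 := by simpa using ENNReal.toNNReal_mono ENNReal.one_ne_top hp
  set q : ℝ := p.toReal with hq
  have hpfin : p ≠ ⊤ := ne_top_of_le_ne_top (by simp) hp
  have h0 : 0 ≤ q := ENNReal.toReal_nonneg
  have h1 : q ≤ 1 := by
    simpa using ENNReal.toReal_mono (by simp) hp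
  have hkey : ∑ i : Fin (k + 1), (PMF.binomial p.toNNReal hp' k i).toReal * (i : ℕ) ^ ℓ = Eb q k ℓ := by
    have hsw : ∑ i : Fin (k + 1), (PMF.binomial p.toNNReal hp' k i).toReal * (i : ℕ) ^ ℓ
        = ∑ i : Fin (k + 1),
            (fun j : ℕ => ((PMF.binomial p.toNNReal hp' k) (Fin.ofNat (k+1) j)).toReal * (j:ℝ)^ℓ) (i:ℕ) :=
      Finset.sum_congr rfl (fun i _ => by simp [Fin.ofNat_val_eq_self])
    rw [hsw, Fin.sum_univ_eq_sum_range
      (fun j : ℕ => ((PMF.binomial p.toNNReal hp' k) (Fin.ofNat (k+1) j)).toReal * (j:ℝ)^ℓ) (k+1), Eb]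
    apply Finset.sum_congr rfl
    intro i hi
    have hik : i ≤ k := Nat.lt_succ_iff.1 (Finset.mem_range.1 hi)
    have hv : ((Fin.ofNat (k+1) i : Fin (k+1)) : ℕ) = i := by
      rw [Fin.val_ofNat]; exact Nat.mod_eq_of_lt (by omega)
    rw [PMF.binomial_apply, hv, Fin.val_last]
    rw [ENNReal.coe_toNNReal hpfin]
    rw [ENNReal.toReal_mul, ENNReal.toReal_mul, ENNReal.toReal_pow, ENNReal.toReal_pow,
        ENNReal.toReal_natCast, ENNReal.toReal_sub_of_le hp (by simp), ENNReal.toReal_one]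
    ring
  rw [hkey]
  exact Eb_le h0 h1 ℓ k
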